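/- Let N be a natural number, q : Fin N → ℝ with q_i ≥ 0 for all i, let A ≥ 0, D > 0, c ≥ 0, α > 0, and let n ≥ 1 be a natural number. Define S = ∑_{m=1}^{n} (−1)^{m+1}·C(n, m)·∫_0^D e^{−c·m·y^α}·(2y/D²) dy, where C(n, m) is the binomial coefficient. Then S ≥ 0, and the function p ↦ ∑_{i=1}^{N} q_i·( 1 − exp(−A·p_i·S) ) is concave on the box [0, 1]^N ⊆ ℝ^N. -/
import Mathlib

open Real Finset intervalIntegral

lemma binom_identity (t : ℝ) (n : ℕ) :
    ∑ m ∈ Finset.Icc 1 n, (-1 : ℝ) ^ (m + 1) * (n.choose m : ℝ) * t ^ m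
      = 1 - (1 - t) ^ n := by
  have hr : Finset.range (n + 1) = insert 0 (Finset.Icc 1 n) := by
    ext x; simp [Finset.mem_range, Finset.mem_Icc]; omega
  have h := add_pow (-t) 1 n
  rw [hr, Finset.sum_insert (by simp)] at h
  have : (1 : ℝ) - t = -t + 1 := by ring
  rw [this, h]
  simp only [pow_zero, one_pow, mul_one, one_mul, Nat.choose_zero_right, Nat.cast_one]
  have hterm : ∀ m ∈ Finset.Icc 1 n, (-1 : ℝ) ^ (m + 1) * (n.choose m : ℝ) * t ^ m
      = -((-t) ^ m * (n.choose m : ℝ)) := by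
    intro m hm
    rw [neg_pow]
    ring
  rw [Finset.sum_congr rfl hterm, Finset.sum_neg_distrib]
  ring

theorem best_selection_objective_concave (N : ℕ) (q : Fin N → ℝ) (hq : ∀ i, 0 ≤ q i)
    (A : ℝ) (hA : 0 ≤ A) (D : ℝ) (hD : 0 < D) (c : ℝ) (hc : 0 ≤ c) (α : ℝ) (hα : 0 < α)
    (n : ℕ) (hn : 1 ≤ n) (S : ℝ)
    (hS : S = ∑ m ∈ Finset.Icc 1 n, (-1 : ℝ) ^ (m + 1) * (n.choose m : ℝ) *
      ∫ y in (0 : ℝ)..D, Real.exp (-(c * (m : ℝ) * y ^ α)) * (2 * y / D ^ 2)) :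
    0 ≤ S ∧
      ConcaveOn ℝ (Set.Icc (0 : Fin N → ℝ) 1)
        (fun p => ∑ i, q i * (1 - Real.exp (-(A * p i * S)))) := by
  have hSnn : 0 ≤ S := by
    have hcont : ∀ m : ℕ, Continuous (fun y : ℝ =>
        (-1 : ℝ) ^ (m + 1) * (n.choose m : ℝ) *
          (Real.exp (-(c * (m : ℝ) * y ^ α)) * (2 * y / D ^ 2))) := by
      intro m
      apply Continuous.mul continuous_const
      apply Continuous.mul
      · exact (Real.continuous_exp.comp (((continuous_const.mul
          (Real.continuous_rpow_const hα.le))).neg))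
      · continuity
    have hint : ∀ m ∈ Finset.Icc 1 n, IntervalIntegrable (fun y : ℝ =>
        (-1 : ℝ) ^ (m + 1) * (n.choose m : ℝ) *
          (Real.exp (-(c * (m : ℝ) * y ^ α)) * (2 * y / D ^ 2)))
        MeasureTheory.volume 0 D := fun m _ => (hcont m).intervalIntegrable _ _
    have hS2 : S = ∫ y in (0:ℝ)..D, ∑ m ∈ Finset.Icc 1 n,
        (-1 : ℝ) ^ (m + 1) * (n.choose m : ℝ) *
          (Real.exp (-(c * (m : ℝ) * y ^ α)) * (2 * y / D ^ 2)) := by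
      rw [intervalIntegral.integral_finset_sum hint, hS]
      refine Finset.sum_congr rfl fun m _ => ?_
      rw [intervalIntegral.integral_const_mul]
    rw [hS2]
    apply intervalIntegral.integral_nonneg hD.le
    intro y hy
    have hy0 : 0 ≤ y := hy.1
    have hkey : ∑ m ∈ Finset.Icc 1 n,
        (-1 : ℝ) ^ (m + 1) * (n.choose m : ℝ) *
          (Real.exp (-(c * (m : ℝ) * y ^ α)) * (2 * y / D ^ 2))
        = (1 - (1 - Real.exp (-(c * y ^ α))) ^ n) * (2 * y / D ^ 2) := by
      rw [← binom_identity, Finset.sum_mul]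
      refine Finset.sum_congr rfl fun m _ => ?_
      have : Real.exp (-(c * (m : ℝ) * y ^ α)) = Real.exp (-(c * y ^ α)) ^ m := by
        rw [← Real.exp_nat_mul]; ring_nf
      rw [this]; ring
    rw [hkey]
    have ht1 : Real.exp (-(c * y ^ α)) ≤ 1 := by
      apply Real.exp_le_one_iff.mpr
      have : 0 ≤ c * y ^ α := mul_nonneg hc (Real.rpow_nonneg hy0 α)
      linarith
    have ht0 : 0 < Real.exp (-(c * y ^ α)) := Real.exp_pos _
    have h1 : (1 - Real.exp (-(c * y ^ α))) ^ n ≤ 1 :=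
      pow_le_one₀ (by linarith) (by linarith)
    have h2 : 0 ≤ 2 * y / D ^ 2 := by positivity
    have := sub_nonneg.mpr h1
    positivity
  refine ⟨hSnn, ?_⟩
  refine ⟨convex_Icc _ _, fun p hp r hr a b ha hb hab => ?_⟩
  simp only [smul_eq_mul, Finset.mul_sum, ← Finset.sum_add_distrib]
  apply Finset.sum_le_sum
  intro i _
  have harg : -(A * (a • p + b • r) i * S)
      = a * (-(A * p i * S)) + b * (-(A * r i * S)) := by
    simp only [Pi.add_apply, Pi.smul_apply, smul_eq_mul]
    have : A * (a * p i + b * r i) * S = a * (A * p i * S) + b * (A * r i * S) := by ring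
    rw [this]; ring
  rw [harg]
  have hexp : Real.exp (a * (-(A * p i * S)) + b * (-(A * r i * S)))
      ≤ a * Real.exp (-(A * p i * S)) + b * Real.exp (-(A * r i * S)) :=
    convexOn_exp.2 (Set.mem_univ _) (Set.mem_univ _) ha hb hab
  have hqi := hq i
  nlinarith [mul_nonneg hqi (sub_nonneg.mpr hexp)]
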